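/- Let each state s ∈ S be represented by a vector in ℝ^d with ‖s‖ ≤ 1, let V(θ) ∈ ℝ^S be the vector with entries V(s,θ) given by the one-hidden-layer network, let J(θ) denote the Jacobian of θ ↦ V(θ), fix θ* ∈ (ℝ^d)^m, and set σ* = σ_min^{2,D}(J(θ*)) = inf_{x ≠ 0} ‖J(θ*)x‖_D / ‖x‖. Then for every θ ∈ (ℝ^d)^m: (θ − θ*)^T J(θ)^T D (γP − I) (V(θ) − V(θ*)) ≤ −(1−γ) σ*² ‖θ − θ*‖² + 2(1+γ) c0 l m^{−1/2} ‖θ − θ*‖³. -/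

import Mathlib

lemma wcs {ι : Type*} [Fintype ι] (w f g : ι → ℝ) (hw : ∀ i, 0 ≤ w i) :
    |∑ i, w i * f i * g i| ≤
      Real.sqrt (∑ i, w i * f i ^ 2) * Real.sqrt (∑ i, w i * g i ^ 2) := by
  have e : ∀ h : ι → ℝ, ∑ i, (Real.sqrt (w i) * h i) ^ 2 = ∑ i, w i * h i ^ 2 :=
    fun h => Finset.sum_congr rfl fun i _ => by rw [mul_pow, Real.sq_sqrt (hw i)]
  have main : ∀ g' : ι → ℝ, ∑ i, w i * f i * g' i ≤
      Real.sqrt (∑ i, w i * f i ^ 2) * Real.sqrt (∑ i, w i * g' i ^ 2) := by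
    intro g'
    have h := Real.sum_mul_le_sqrt_mul_sqrt Finset.univ
      (fun i => Real.sqrt (w i) * f i) (fun i => Real.sqrt (w i) * g' i)
    rw [e f, e g'] at h
    refine le_trans (le_of_eq ?_) h
    refine Finset.sum_congr rfl fun i _ => ?_
    linear_combination (f i * g' i) * (Real.mul_self_sqrt (hw i)).symm
  rw [abs_le]
  refine ⟨?_, main g⟩
  have h2 := main (fun i => -g i)
  rw [neg_le]
  calc -∑ i, w i * f i * g i = ∑ i, w i * f i * -g i := by
        rw [← Finset.sum_neg_distrib]
        exact Finset.sum_congr rfl fun i _ => (mul_neg _ _).symm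
    _ ≤ Real.sqrt (∑ i, w i * f i ^ 2) * Real.sqrt (∑ i, w i * (-g i) ^ 2) := h2
    _ = _ := by
        congr 1
        exact congrArg _ (Finset.sum_congr rfl fun i _ => by rw [neg_sq])

lemma deriv_le_lip {σ : ℝ → ℝ} {l : ℝ}
    (hσlip : ∀ u v, |σ u - σ v| ≤ l * |u - v|) (x : ℝ) : |deriv σ x| ≤ l := by
  have hl : 0 ≤ l := by
    have := hσlip 0 1
    have h0 := abs_nonneg (σ 0 - σ 1)
    simp only [show |(0:ℝ) - 1| = 1 by norm_num, mul_one] at this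
    linarith
  have := norm_deriv_le_of_lip' (𝕜 := ℝ) (f := σ) (x₀ := x) hl
    (Filter.Eventually.of_forall fun y => by
      simpa [Real.norm_eq_abs] using hσlip y x)
  simpa [Real.norm_eq_abs] using this

lemma taylor1 {σ : ℝ → ℝ} {c0 : ℝ} (hσdiff : Differentiable ℝ σ)
    (hσsmooth : ∀ u v, |deriv σ u - deriv σ v| ≤ c0 * |u - v|) (x y : ℝ) :
    |σ y - σ x - deriv σ x * (y - x)| ≤ c0 * (y - x) ^ 2 := by
  have hc0 : 0 ≤ c0 := by
    have := hσsmooth 0 1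
    have h0 := abs_nonneg (deriv σ 0 - deriv σ 1)
    simp only [show |(0:ℝ) - 1| = 1 by norm_num, mul_one] at this
    linarith
  rcases lt_trichotomy x y with hxy | hxy | hxy
  · obtain ⟨c, hc, hde⟩ := exists_hasDerivAt_eq_slope σ (deriv σ) hxy
      hσdiff.continuous.continuousOn (fun t _ => (hσdiff t).hasDerivAt)
    have h1 : σ y - σ x = deriv σ c * (y - x) := by
      rw [hde, div_mul_cancel₀ _ (by linarith : y - x ≠ 0)]
    rw [h1, ← sub_mul, abs_mul]
    have h2 : |deriv σ c - deriv σ x| ≤ c0 * |c - x| := hσsmooth c x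
    have h3 : |c - x| ≤ |y - x| := by
      rw [abs_of_pos (by linarith [hc.1] : (0:ℝ) < c - x),
        abs_of_pos (by linarith : (0:ℝ) < y - x)]
      linarith [hc.2]
    calc |deriv σ c - deriv σ x| * |y - x|
        ≤ (c0 * |y - x|) * |y - x| :=
          mul_le_mul_of_nonneg_right
            (h2.trans (mul_le_mul_of_nonneg_left h3 hc0)) (abs_nonneg _)
      _ = c0 * (y - x) ^ 2 := by rw [mul_assoc, abs_mul_abs_self, sq]
  · simp [hxy]
  · obtain ⟨c, hc, hde⟩ := exists_hasDerivAt_eq_slope σ (deriv σ) hxy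
      hσdiff.continuous.continuousOn (fun t _ => (hσdiff t).hasDerivAt)
    have h1 : σ y - σ x = deriv σ c * (y - x) := by
      rw [hde, div_mul_eq_mul_div, eq_div_iff (by linarith : x - y ≠ 0)]; ring
    rw [h1, ← sub_mul, abs_mul]
    have h2 : |deriv σ c - deriv σ x| ≤ c0 * |c - x| := hσsmooth c x
    have h3 : |c - x| ≤ |y - x| := by
      rw [abs_of_neg (by linarith [hc.2] : c - x < 0),
        abs_of_neg (by linarith : y - x < 0)]
      linarith [hc.1]
    calc |deriv σ c - deriv σ x| * |y - x|
        ≤ (c0 * |y - x|) * |y - x| :=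
          mul_le_mul_of_nonneg_right
            (h2.trans (mul_le_mul_of_nonneg_left h3 hc0)) (abs_nonneg _)
      _ = c0 * (y - x) ^ 2 := by rw [mul_assoc, abs_mul_abs_self, sq]

lemma fder {S : Type*} [Fintype S] {d m : ℕ} (σ : ℝ → ℝ) (hσdiff : Differentiable ℝ σ)
    (b : Fin m → ℝ) (emb : S → EuclideanSpace ℝ (Fin d)) (c : ℝ)
    (V : EuclideanSpace ℝ (Fin m × Fin d) → EuclideanSpace ℝ S)
    (hV : ∀ θ s, V θ s = c * ∑ r, b r * σ (∑ j, θ (r, j) * emb s j))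
    (θ' u : EuclideanSpace ℝ (Fin m × Fin d)) (s : S) :
    fderiv ℝ V θ' u s =
      c * ∑ r, b r * (deriv σ (∑ j, θ' (r, j) * emb s j) * ∑ j, u (r, j) * emb s j) := by
  classical
  let ip : Fin m → S → (EuclideanSpace ℝ (Fin m × Fin d) →L[ℝ] ℝ) := fun r s =>
    LinearMap.toContinuousLinearMap
      { toFun := fun u => ∑ j, u (r, j) * emb s j
        map_add' := fun u v => by
          simp [PiLp.add_apply, add_mul, Finset.sum_add_distrib]
        map_smul' := fun a u => by
          simp [PiLp.smul_apply, smul_eq_mul, Finset.mul_sum, mul_assoc] }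
  have hip : ∀ r s (u : EuclideanSpace ℝ (Fin m × Fin d)),
      ip r s u = ∑ j, u (r, j) * emb s j := fun r s u => rfl
  let g : S → (EuclideanSpace ℝ (Fin m × Fin d) →L[ℝ] ℝ) := fun s =>
    c • ∑ r, b r • (deriv σ (∑ j, θ' (r, j) * emb s j) • ip r s)
  have hW : ∀ s, HasFDerivAt
      (fun θ : EuclideanSpace ℝ (Fin m × Fin d) => c * ∑ r, b r * σ (∑ j, θ (r, j) * emb s j))
      (g s) θ' := by
    intro s
    have h1 : ∀ r : Fin m, HasFDerivAt
        (fun θ : EuclideanSpace ℝ (Fin m × Fin d) => σ (∑ j, θ (r, j) * emb s j))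
        (deriv σ (∑ j, θ' (r, j) * emb s j) • ip r s) θ' := by
      intro r
      have hcomp := ((hσdiff (ip r s θ')).hasDerivAt).comp_hasFDerivAt θ' ((ip r s).hasFDerivAt)
      exact hcomp
    have h2 : HasFDerivAt
        (fun θ : EuclideanSpace ℝ (Fin m × Fin d) => ∑ r, b r * σ (∑ j, θ (r, j) * emb s j))
        (∑ r, b r • (deriv σ (∑ j, θ' (r, j) * emb s j) • ip r s)) θ' :=
      HasFDerivAt.fun_sum fun r _ => (h1 r).const_mul (b r)
    exact h2.const_mul c
  let eqv := (PiLp.continuousLinearEquiv 2 ℝ (fun _ : S => ℝ)).symm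
  have hVfun : V = fun θ => eqv (fun s => c * ∑ r, b r * σ (∑ j, θ (r, j) * emb s j)) := by
    funext θ
    ext s
    rw [hV θ s]
    rfl
  have hΦ : HasFDerivAt V (eqv.toContinuousLinearMap.comp (ContinuousLinearMap.pi g)) θ' := by
    rw [hVfun]
    refine (eqv.toContinuousLinearMap.hasFDerivAt).comp θ' ?_
    exact hasFDerivAt_pi'.mpr fun s => by rw [ContinuousLinearMap.proj_pi]; exact hW s
  rw [hΦ.fderiv]
  show (eqv ((ContinuousLinearMap.pi g) u)) s = _
  have : (eqv ((ContinuousLinearMap.pi g) u)) s = g s u := rfl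
  rw [this]
  simp only [g, ContinuousLinearMap.smul_apply, ContinuousLinearMap.sum_apply, hip,
    smul_eq_mul, Finset.mul_sum]
lemma Dn_le {S : Type*} [Fintype S] (μ : S → ℝ) (hμnonneg : ∀ s, 0 ≤ μ s)
    (hμsum : ∑ s, μ s = 1) (g : S → ℝ) (M : ℝ) (hM : 0 ≤ M) (h : ∀ s, |g s| ≤ M) :
    Real.sqrt (∑ s, μ s * g s ^ 2) ≤ M := by
  have h1 : ∑ s, μ s * g s ^ 2 ≤ ∑ s, μ s * M ^ 2 := by
    refine Finset.sum_le_sum fun s _ => ?_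
    refine mul_le_mul_of_nonneg_left ?_ (hμnonneg s)
    calc g s ^ 2 = |g s| ^ 2 := (sq_abs _).symm
      _ ≤ M ^ 2 := pow_le_pow_left₀ (abs_nonneg _) (h s) 2
  have h2 : ∑ s, μ s * M ^ 2 = M ^ 2 := by
    rw [← Finset.sum_mul, hμsum, one_mul]
  calc Real.sqrt (∑ s, μ s * g s ^ 2) ≤ Real.sqrt (M ^ 2) :=
        Real.sqrt_le_sqrt (by linarith)
    _ = M := Real.sqrt_sq hM

lemma combine {S : Type*} [Fintype S] (P : S → S → ℝ) (μ : S → ℝ) (γ : ℝ)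
    (hPnonneg : ∀ s s', 0 ≤ P s s') (hProw : ∀ s, ∑ s', P s s' = 1)
    (hμnonneg : ∀ s, 0 ≤ μ s) (hstat : ∀ s', ∑ s, μ s * P s s' = μ s')
    (hγ0 : 0 ≤ γ) (hγ1 : γ ≤ 1) (f fs Δ : S → ℝ) :
    γ * ∑ s, ∑ s', μ s * P s s' * f s * Δ s' - ∑ s, μ s * f s * Δ s
      ≤ -((1 - γ) * (∑ s, μ s * fs s ^ 2))
        + (1 + γ) * (Real.sqrt (∑ s, μ s * (f s - fs s) ^ 2) * Real.sqrt (∑ s, μ s * Δ s ^ 2)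
          + Real.sqrt (∑ s, μ s * fs s ^ 2) * Real.sqrt (∑ s, μ s * (Δ s - fs s) ^ 2)) := by
  classical
  -- first moment identity
  have hmom1 : ∀ g : S → ℝ, ∑ s, ∑ s', μ s * P s s' * g s ^ 2 = ∑ s, μ s * g s ^ 2 := by
    intro g
    refine Finset.sum_congr rfl fun s _ => ?_
    calc ∑ s', μ s * P s s' * g s ^ 2 = (μ s * g s ^ 2) * ∑ s', P s s' := by
          rw [Finset.mul_sum]; exact Finset.sum_congr rfl fun s' _ => by ring
      _ = μ s * g s ^ 2 := by rw [hProw s, mul_one]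
  have hmom2 : ∀ g : S → ℝ, ∑ s, ∑ s', μ s * P s s' * g s' ^ 2 = ∑ s, μ s * g s ^ 2 := by
    intro g
    rw [Finset.sum_comm]
    refine Finset.sum_congr rfl fun s' _ => ?_
    calc ∑ s, μ s * P s s' * g s' ^ 2 = (∑ s, μ s * P s s') * g s' ^ 2 := by
          rw [Finset.sum_mul]
      _ = μ s' * g s' ^ 2 := by rw [hstat s']
  -- Cauchy-Schwarz for the double sum
  have hA : ∀ g h : S → ℝ, |∑ s, ∑ s', μ s * P s s' * g s * h s'| ≤
      Real.sqrt (∑ s, μ s * g s ^ 2) * Real.sqrt (∑ s, μ s * h s ^ 2) := by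
    intro g h
    have hw : ∀ p : S × S, 0 ≤ μ p.1 * P p.1 p.2 :=
      fun p => mul_nonneg (hμnonneg _) (hPnonneg _ _)
    have key := wcs (fun p : S × S => μ p.1 * P p.1 p.2) (fun p => g p.1) (fun p => h p.2) hw
    have e0 : ∑ s, ∑ s', μ s * P s s' * g s * h s'
        = ∑ p : S × S, μ p.1 * P p.1 p.2 * g p.1 * h p.2 := by
      rw [Fintype.sum_prod_type]
    have e1 : ∑ p : S × S, μ p.1 * P p.1 p.2 * g p.1 ^ 2 = ∑ s, μ s * g s ^ 2 := by
      rw [Fintype.sum_prod_type]; exact hmom1 g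
    have e2 : ∑ p : S × S, μ p.1 * P p.1 p.2 * h p.2 ^ 2 = ∑ s, μ s * h s ^ 2 := by
      rw [Fintype.sum_prod_type]; exact hmom2 h
    rw [e0]
    rw [e1, e2] at key
    exact key
  -- Cauchy-Schwarz for the single sum
  have hC : ∀ g h : S → ℝ, |∑ s, μ s * g s * h s| ≤
      Real.sqrt (∑ s, μ s * g s ^ 2) * Real.sqrt (∑ s, μ s * h s ^ 2) :=
    fun g h => wcs μ g h hμnonneg
  -- decomposition
  have hdecA : ∑ s, ∑ s', μ s * P s s' * f s * Δ s'
      = (∑ s, ∑ s', μ s * P s s' * fs s * fs s')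
        + (∑ s, ∑ s', μ s * P s s' * (f s - fs s) * Δ s')
        + (∑ s, ∑ s', μ s * P s s' * fs s * (Δ s' - fs s')) := by
    rw [← Finset.sum_add_distrib, ← Finset.sum_add_distrib]
    refine Finset.sum_congr rfl fun s _ => ?_
    rw [← Finset.sum_add_distrib, ← Finset.sum_add_distrib]
    exact Finset.sum_congr rfl fun s' _ => by ring
  have hdecC : ∑ s, μ s * f s * Δ s
      = (∑ s, μ s * fs s * fs s) + (∑ s, μ s * (f s - fs s) * Δ s)
        + (∑ s, μ s * fs s * (Δ s - fs s)) := by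
    rw [← Finset.sum_add_distrib, ← Finset.sum_add_distrib]
    exact Finset.sum_congr rfl fun s _ => by ring
  -- self term
  have hself : γ * ∑ s, ∑ s', μ s * P s s' * fs s * fs s' - ∑ s, μ s * fs s * fs s
      ≤ -((1 - γ) * (∑ s, μ s * fs s ^ 2)) := by
    have h1 : ∑ s, ∑ s', μ s * P s s' * fs s * fs s' ≤ ∑ s, μ s * fs s ^ 2 := by
      have := (abs_le.mp (hA fs fs)).2
      have hsq : Real.sqrt (∑ s, μ s * fs s ^ 2) * Real.sqrt (∑ s, μ s * fs s ^ 2)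
          = ∑ s, μ s * fs s ^ 2 :=
        Real.mul_self_sqrt (Finset.sum_nonneg fun s _ =>
          mul_nonneg (hμnonneg s) (sq_nonneg _))
      linarith
    have h2 : ∑ s, μ s * fs s * fs s = ∑ s, μ s * fs s ^ 2 :=
      Finset.sum_congr rfl fun s _ => by ring
    nlinarith [Finset.sum_nonneg (fun s (_ : s ∈ Finset.univ) =>
      mul_nonneg (hμnonneg s) (sq_nonneg (fs s)))]
  -- cross terms
  have hcross : ∀ g h : S → ℝ,
      γ * ∑ s, ∑ s', μ s * P s s' * g s * h s' - ∑ s, μ s * g s * h s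
      ≤ (1 + γ) * (Real.sqrt (∑ s, μ s * g s ^ 2) * Real.sqrt (∑ s, μ s * h s ^ 2)) := by
    intro g h
    have h1 := abs_le.mp (hA g h)
    have h2 := abs_le.mp (hC g h)
    nlinarith [h1.1, h1.2, h2.1, h2.2]
  have hc1 := hcross (fun s => f s - fs s) Δ
  have hc2 := hcross fs (fun s => Δ s - fs s)
  rw [hdecA, hdecC]
  nlinarith [hc1, hc2, hself]

/-- For the one-hidden-layer network,
`(θ−θ*)ᵀ J(θ)ᵀ D (γP−I) (V(θ)−V(θ*))
   ≤ −(1−γ) σ*² ‖θ−θ*‖² + 2(1+γ) c0 l m^{−1/2} ‖θ−θ*‖³`,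
where `σ* = inf_{x≠0} ‖J(θ*)x‖_D / ‖x‖`. -/
theorem stmt18 {S : Type*} [Fintype S] {d m : ℕ} (hm : 1 ≤ m)
    (P : S → S → ℝ) (μ : S → ℝ) (γ l c0 : ℝ)
    (hPnonneg : ∀ s s', 0 ≤ P s s') (hProw : ∀ s, ∑ s', P s s' = 1)
    (hμnonneg : ∀ s, 0 ≤ μ s) (hμsum : ∑ s, μ s = 1)
    (hstat : ∀ s', ∑ s, μ s * P s s' = μ s')
    (hγ : γ ∈ Set.Ioo (0 : ℝ) 1)
    (σ : ℝ → ℝ) (hσdiff : Differentiable ℝ σ)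
    (hσlip : ∀ u v, |σ u - σ v| ≤ l * |u - v|)
    (hσsmooth : ∀ u v, |deriv σ u - deriv σ v| ≤ c0 * |u - v|)
    (b : Fin m → ℝ) (hb : ∀ r, |b r| ≤ 1)
    (emb : S → EuclideanSpace ℝ (Fin d)) (hemb : ∀ s, ‖emb s‖ ≤ 1)
    (V : EuclideanSpace ℝ (Fin m × Fin d) → EuclideanSpace ℝ S)
    (hV : ∀ θ s, V θ s = (1 / Real.sqrt m) * ∑ r, b r * σ (∑ j, θ (r, j) * emb s j))
    (θstar θ : EuclideanSpace ℝ (Fin m × Fin d)) :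
    γ * ∑ s, ∑ s', μ s * P s s' *
          fderiv ℝ V θ (θ - θstar) s * (V θ - V θstar) s'
        - ∑ s, μ s * fderiv ℝ V θ (θ - θstar) s * (V θ - V θstar) s
      ≤ -((1 - γ) * (⨅ x : {x : EuclideanSpace ℝ (Fin m × Fin d) // x ≠ 0},
              Real.sqrt (∑ s, μ s * (fderiv ℝ V θstar x.1 s) ^ 2) / ‖x.1‖) ^ 2
            * ‖θ - θstar‖ ^ 2)
        + 2 * (1 + γ) * c0 * l * (Real.sqrt m)⁻¹ * ‖θ - θstar‖ ^ 3 := by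
  classical
  obtain ⟨hγ0, hγ1⟩ := hγ
  have hl : 0 ≤ l := by
    have h1 := hσlip 0 1
    have h0 := abs_nonneg (σ 0 - σ 1)
    simp only [show |(0:ℝ) - 1| = 1 by norm_num, mul_one] at h1
    linarith
  have hc0 : 0 ≤ c0 := by
    have h1 := hσsmooth 0 1
    have h0 := abs_nonneg (deriv σ 0 - deriv σ 1)
    simp only [show |(0:ℝ) - 1| = 1 by norm_num, mul_one] at h1
    linarith
  have hm0 : (0:ℝ) < Real.sqrt m :=
    Real.sqrt_pos.mpr (by exact_mod_cast Nat.pos_of_ne_zero (by omega))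
  set c : ℝ := (Real.sqrt m)⁻¹ with hcdef
  have hcpos : 0 < c := by positivity
  have hV' : ∀ θ' s, V θ' s = c * ∑ r, b r * σ (∑ j, θ' (r, j) * emb s j) := by
    intro θ' s; rw [hV θ' s, one_div]
  have hF : ∀ (θ' u : EuclideanSpace ℝ (Fin m × Fin d)) (s : S), fderiv ℝ V θ' u s =
      c * ∑ r, b r * (deriv σ (∑ j, θ' (r, j) * emb s j) * ∑ j, u (r, j) * emb s j) :=
    fder σ hσdiff b emb c V hV'
  set z := θ - θstar with hzdef
  by_cases hz : z = 0
  · rw [hz]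
    simp [map_zero]
  -- main case
  set a : Fin m → ℝ := fun r => Real.sqrt (∑ j, z (r, j) ^ 2) with hadef
  have ha0 : ∀ r, 0 ≤ a r := fun r => Real.sqrt_nonneg _
  have hasq : ∀ r, a r ^ 2 = ∑ j, z (r, j) ^ 2 := fun r =>
    Real.sq_sqrt (Finset.sum_nonneg fun j _ => sq_nonneg _)
  have hnormz : ‖z‖ ^ 2 = ∑ p : Fin m × Fin d, z p ^ 2 := by
    rw [EuclideanSpace.norm_eq, Real.sq_sqrt (Finset.sum_nonneg fun p _ => by positivity)]
    exact Finset.sum_congr rfl fun p _ => by rw [Real.norm_eq_abs, sq_abs]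
  have hnorm : ∑ r, a r ^ 2 = ‖z‖ ^ 2 := by
    rw [hnormz, Fintype.sum_prod_type]
    exact Finset.sum_congr rfl fun r _ => (hasq r)
  have hip : ∀ (u : EuclideanSpace ℝ (Fin m × Fin d)) (r : Fin m) (s : S),
      |∑ j, u (r, j) * emb s j| ≤ Real.sqrt (∑ j, u (r, j) ^ 2) := by
    intro u r s
    have hCS := Finset.sum_mul_sq_le_sq_mul_sq Finset.univ
      (fun j => u (r, j)) (fun j => emb s j)
    have he : ∑ j, emb s j ^ 2 ≤ 1 := by
      have h1 : ‖emb s‖ ^ 2 = ∑ j, emb s j ^ 2 := by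
        rw [EuclideanSpace.norm_eq, Real.sq_sqrt (Finset.sum_nonneg fun j _ => by positivity)]
        exact Finset.sum_congr rfl fun j _ => by rw [Real.norm_eq_abs, sq_abs]
      nlinarith [hemb s, norm_nonneg (emb s)]
    rw [← Real.sqrt_sq_eq_abs]
    apply Real.sqrt_le_sqrt
    nlinarith [Finset.sum_nonneg (fun j (_ : j ∈ Finset.univ) => sq_nonneg (u (r, j)))]
  have hza : ∀ (r : Fin m) (s : S), |∑ j, z (r, j) * emb s j| ≤ a r := fun r s => hip z r s
  have hsuma : ∑ r, a r ≤ Real.sqrt m * ‖z‖ := by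
    have hCS := Finset.sum_mul_sq_le_sq_mul_sq Finset.univ (fun _ : Fin m => (1:ℝ)) a
    simp only [one_mul, one_pow, Finset.sum_const, Finset.card_univ, Fintype.card_fin,
      nsmul_eq_mul, mul_one] at hCS
    rw [hnorm] at hCS
    have h0 : 0 ≤ ∑ r, a r := Finset.sum_nonneg fun r _ => ha0 r
    calc ∑ r, a r = Real.sqrt ((∑ r, a r) ^ 2) := (Real.sqrt_sq h0).symm
      _ ≤ Real.sqrt ((Real.sqrt m * ‖z‖) ^ 2) := by
          apply Real.sqrt_le_sqrt
          rw [mul_pow, Real.sq_sqrt (Nat.cast_nonneg m)]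
          exact hCS
      _ = Real.sqrt m * ‖z‖ := Real.sqrt_sq (by positivity)
  have hsub : ∀ (r : Fin m) (s : S),
      (∑ j, θ (r, j) * emb s j) - (∑ j, θstar (r, j) * emb s j)
        = ∑ j, z (r, j) * emb s j := by
    intro r s
    rw [← Finset.sum_sub_distrib]
    refine Finset.sum_congr rfl fun j _ => ?_
    rw [hzdef]
    show θ (r, j) * emb s j - θstar (r, j) * emb s j = (θ (r, j) - θstar (r, j)) * emb s j
    ring
  -- pointwise bounds
  have p1 : ∀ s, |V θ s - V θstar s| ≤ l * ‖z‖ := by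
    intro s
    rw [hV' θ s, hV' θstar s, ← mul_sub, ← Finset.sum_sub_distrib, abs_mul, abs_of_pos hcpos]
    have hbd : ∀ r : Fin m, |b r * σ (∑ j, θ (r, j) * emb s j)
        - b r * σ (∑ j, θstar (r, j) * emb s j)| ≤ l * a r := by
      intro r
      rw [← mul_sub, abs_mul]
      calc |b r| * |σ (∑ j, θ (r, j) * emb s j) - σ (∑ j, θstar (r, j) * emb s j)|
          ≤ 1 * (l * a r) := by
            refine mul_le_mul (hb r) ?_ (abs_nonneg _) zero_le_one
            refine (hσlip _ _).trans ?_
            rw [hsub r s]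
            exact mul_le_mul_of_nonneg_left (hza r s) hl
        _ = l * a r := one_mul _
    calc c * |∑ r, (b r * σ (∑ j, θ (r, j) * emb s j)
            - b r * σ (∑ j, θstar (r, j) * emb s j))|
        ≤ c * ∑ r, |b r * σ (∑ j, θ (r, j) * emb s j)
            - b r * σ (∑ j, θstar (r, j) * emb s j)| :=
          mul_le_mul_of_nonneg_left (Finset.abs_sum_le_sum_abs _ _) hcpos.le
      _ ≤ c * ∑ r, l * a r :=
          mul_le_mul_of_nonneg_left (Finset.sum_le_sum fun r _ => hbd r) hcpos.le
      _ = c * (l * ∑ r, a r) := by simp only [Finset.mul_sum]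
      _ ≤ c * (l * (Real.sqrt m * ‖z‖)) :=
          mul_le_mul_of_nonneg_left (mul_le_mul_of_nonneg_left hsuma hl) hcpos.le
      _ = l * ‖z‖ := by
          rw [hcdef]
          field_simp
  have p4 : ∀ s, |fderiv ℝ V θstar z s| ≤ l * ‖z‖ := by
    intro s
    rw [hF θstar z s, abs_mul, abs_of_pos hcpos]
    have hbd : ∀ r : Fin m, |b r * (deriv σ (∑ j, θstar (r, j) * emb s j)
        * ∑ j, z (r, j) * emb s j)| ≤ l * a r := by
      intro r
      rw [abs_mul, abs_mul]
      calc |b r| * (|deriv σ (∑ j, θstar (r, j) * emb s j)| * |∑ j, z (r, j) * emb s j|)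
          ≤ 1 * (l * a r) := by
            refine mul_le_mul (hb r) ?_ (by positivity) zero_le_one
            exact mul_le_mul (deriv_le_lip hσlip _) (hza r s) (abs_nonneg _) hl
        _ = l * a r := one_mul _
    calc c * |∑ r, b r * (deriv σ (∑ j, θstar (r, j) * emb s j) * ∑ j, z (r, j) * emb s j)|
        ≤ c * ∑ r, |b r * (deriv σ (∑ j, θstar (r, j) * emb s j) * ∑ j, z (r, j) * emb s j)| :=
          mul_le_mul_of_nonneg_left (Finset.abs_sum_le_sum_abs _ _) hcpos.le
      _ ≤ c * ∑ r, l * a r :=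
          mul_le_mul_of_nonneg_left (Finset.sum_le_sum fun r _ => hbd r) hcpos.le
      _ = c * (l * ∑ r, a r) := by simp only [Finset.mul_sum]
      _ ≤ c * (l * (Real.sqrt m * ‖z‖)) :=
          mul_le_mul_of_nonneg_left (mul_le_mul_of_nonneg_left hsuma hl) hcpos.le
      _ = l * ‖z‖ := by
          rw [hcdef]
          field_simp
  have p2 : ∀ s, |fderiv ℝ V θ z s - fderiv ℝ V θstar z s| ≤ c0 * c * ‖z‖ ^ 2 := by
    intro s
    rw [hF θ z s, hF θstar z s, ← mul_sub, ← Finset.sum_sub_distrib, abs_mul, abs_of_pos hcpos]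
    have hbd : ∀ r : Fin m, |b r * (deriv σ (∑ j, θ (r, j) * emb s j)
          * ∑ j, z (r, j) * emb s j)
        - b r * (deriv σ (∑ j, θstar (r, j) * emb s j) * ∑ j, z (r, j) * emb s j)|
        ≤ c0 * a r ^ 2 := by
      intro r
      have heq : b r * (deriv σ (∑ j, θ (r, j) * emb s j) * ∑ j, z (r, j) * emb s j)
          - b r * (deriv σ (∑ j, θstar (r, j) * emb s j) * ∑ j, z (r, j) * emb s j)
          = b r * ((deriv σ (∑ j, θ (r, j) * emb s j)
            - deriv σ (∑ j, θstar (r, j) * emb s j)) * ∑ j, z (r, j) * emb s j) := by ring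
      rw [heq, abs_mul, abs_mul]
      calc |b r| * (|deriv σ (∑ j, θ (r, j) * emb s j)
              - deriv σ (∑ j, θstar (r, j) * emb s j)| * |∑ j, z (r, j) * emb s j|)
          ≤ 1 * ((c0 * a r) * a r) := by
            refine mul_le_mul (hb r) ?_ (by positivity) zero_le_one
            refine mul_le_mul ?_ (hza r s) (abs_nonneg _) (by positivity)
            refine (hσsmooth _ _).trans ?_
            rw [hsub r s]
            exact mul_le_mul_of_nonneg_left (hza r s) hc0
        _ = c0 * a r ^ 2 := by ring
    calc c * |∑ r, (b r * (deriv σ (∑ j, θ (r, j) * emb s j) * ∑ j, z (r, j) * emb s j)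
            - b r * (deriv σ (∑ j, θstar (r, j) * emb s j) * ∑ j, z (r, j) * emb s j))|
        ≤ c * ∑ r, |b r * (deriv σ (∑ j, θ (r, j) * emb s j) * ∑ j, z (r, j) * emb s j)
            - b r * (deriv σ (∑ j, θstar (r, j) * emb s j) * ∑ j, z (r, j) * emb s j)| :=
          mul_le_mul_of_nonneg_left (Finset.abs_sum_le_sum_abs _ _) hcpos.le
      _ ≤ c * ∑ r, c0 * a r ^ 2 :=
          mul_le_mul_of_nonneg_left (Finset.sum_le_sum fun r _ => hbd r) hcpos.le
      _ = c * (c0 * ∑ r, a r ^ 2) := by simp only [Finset.mul_sum]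
      _ = c0 * c * ‖z‖ ^ 2 := by rw [hnorm]; ring
  have p3 : ∀ s, |(V θ s - V θstar s) - fderiv ℝ V θstar z s| ≤ c0 * c * ‖z‖ ^ 2 := by
    intro s
    rw [hV' θ s, hV' θstar s, hF θstar z s, ← mul_sub, ← mul_sub,
      ← Finset.sum_sub_distrib, ← Finset.sum_sub_distrib, abs_mul, abs_of_pos hcpos]
    have hbd : ∀ r : Fin m, |b r * σ (∑ j, θ (r, j) * emb s j)
        - b r * σ (∑ j, θstar (r, j) * emb s j)
        - b r * (deriv σ (∑ j, θstar (r, j) * emb s j) * ∑ j, z (r, j) * emb s j)|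
        ≤ c0 * a r ^ 2 := by
      intro r
      have heq : b r * σ (∑ j, θ (r, j) * emb s j) - b r * σ (∑ j, θstar (r, j) * emb s j)
          - b r * (deriv σ (∑ j, θstar (r, j) * emb s j) * ∑ j, z (r, j) * emb s j)
          = b r * (σ (∑ j, θ (r, j) * emb s j) - σ (∑ j, θstar (r, j) * emb s j)
            - deriv σ (∑ j, θstar (r, j) * emb s j) * ∑ j, z (r, j) * emb s j) := by ring
      rw [heq, abs_mul]
      have htay : |σ (∑ j, θ (r, j) * emb s j) - σ (∑ j, θstar (r, j) * emb s j)
          - deriv σ (∑ j, θstar (r, j) * emb s j) * ∑ j, z (r, j) * emb s j|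
          ≤ c0 * a r ^ 2 := by
        have h := taylor1 hσdiff hσsmooth (∑ j, θstar (r, j) * emb s j)
          (∑ j, θ (r, j) * emb s j)
        rw [hsub r s] at h
        refine h.trans ?_
        refine mul_le_mul_of_nonneg_left ?_ hc0
        calc (∑ j, z (r, j) * emb s j) ^ 2 = |∑ j, z (r, j) * emb s j| ^ 2 := (sq_abs _).symm
          _ ≤ a r ^ 2 := pow_le_pow_left₀ (abs_nonneg _) (hza r s) 2
      calc |b r| * |σ (∑ j, θ (r, j) * emb s j) - σ (∑ j, θstar (r, j) * emb s j)
            - deriv σ (∑ j, θstar (r, j) * emb s j) * ∑ j, z (r, j) * emb s j|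
          ≤ 1 * (c0 * a r ^ 2) := mul_le_mul (hb r) htay (abs_nonneg _) zero_le_one
        _ = c0 * a r ^ 2 := one_mul _
    calc c * |∑ r, (b r * σ (∑ j, θ (r, j) * emb s j)
            - b r * σ (∑ j, θstar (r, j) * emb s j)
            - b r * (deriv σ (∑ j, θstar (r, j) * emb s j) * ∑ j, z (r, j) * emb s j))|
        ≤ c * ∑ r, |b r * σ (∑ j, θ (r, j) * emb s j)
            - b r * σ (∑ j, θstar (r, j) * emb s j)
            - b r * (deriv σ (∑ j, θstar (r, j) * emb s j) * ∑ j, z (r, j) * emb s j)| :=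
          mul_le_mul_of_nonneg_left (Finset.abs_sum_le_sum_abs _ _) hcpos.le
      _ ≤ c * ∑ r, c0 * a r ^ 2 :=
          mul_le_mul_of_nonneg_left (Finset.sum_le_sum fun r _ => hbd r) hcpos.le
      _ = c * (c0 * ∑ r, a r ^ 2) := by simp only [Finset.mul_sum]
      _ = c0 * c * ‖z‖ ^ 2 := by rw [hnorm]; ring
  -- D-norm bounds
  have d1 : Real.sqrt (∑ s, μ s * (fderiv ℝ V θ z s - fderiv ℝ V θstar z s) ^ 2)
      ≤ c0 * c * ‖z‖ ^ 2 :=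
    Dn_le μ hμnonneg hμsum _ _ (by positivity) p2
  have d2 : Real.sqrt (∑ s, μ s * (V θ s - V θstar s) ^ 2) ≤ l * ‖z‖ :=
    Dn_le μ hμnonneg hμsum _ _ (by positivity) p1
  have d3 : Real.sqrt (∑ s, μ s * ((V θ s - V θstar s) - fderiv ℝ V θstar z s) ^ 2)
      ≤ c0 * c * ‖z‖ ^ 2 :=
    Dn_le μ hμnonneg hμsum _ _ (by positivity) p3
  have d4 : Real.sqrt (∑ s, μ s * (fderiv ℝ V θstar z s) ^ 2) ≤ l * ‖z‖ :=
    Dn_le μ hμnonneg hμsum _ _ (by positivity) p4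
  -- infimum bound
  haveI : Nonempty {x : EuclideanSpace ℝ (Fin m × Fin d) // x ≠ 0} := ⟨⟨z, hz⟩⟩
  set σs : ℝ := ⨅ x : {x : EuclideanSpace ℝ (Fin m × Fin d) // x ≠ 0},
    Real.sqrt (∑ s, μ s * (fderiv ℝ V θstar x.1 s) ^ 2) / ‖x.1‖ with hσsdef
  have hbdd : BddBelow (Set.range fun x : {x : EuclideanSpace ℝ (Fin m × Fin d) // x ≠ 0} =>
      Real.sqrt (∑ s, μ s * (fderiv ℝ V θstar x.1 s) ^ 2) / ‖x.1‖) := by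
    refine ⟨0, ?_⟩
    rintro y ⟨x, rfl⟩
    positivity
  have hσs_le : σs ≤ Real.sqrt (∑ s, μ s * (fderiv ℝ V θstar z s) ^ 2) / ‖z‖ :=
    ciInf_le hbdd ⟨z, hz⟩
  have hσs0 : 0 ≤ σs := le_ciInf fun x => by positivity
  have hnz : (0:ℝ) < ‖z‖ := norm_pos_iff.mpr hz
  have hkey : σs ^ 2 * ‖z‖ ^ 2 ≤ ∑ s, μ s * (fderiv ℝ V θstar z s) ^ 2 := by
    have h1 : σs * ‖z‖ ≤ Real.sqrt (∑ s, μ s * (fderiv ℝ V θstar z s) ^ 2) :=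
      (le_div_iff₀ hnz).mp hσs_le
    have h2 : Real.sqrt (∑ s, μ s * (fderiv ℝ V θstar z s) ^ 2) ^ 2
        = ∑ s, μ s * (fderiv ℝ V θstar z s) ^ 2 :=
      Real.sq_sqrt (Finset.sum_nonneg fun s _ => mul_nonneg (hμnonneg s) (sq_nonneg _))
    calc σs ^ 2 * ‖z‖ ^ 2 = (σs * ‖z‖) ^ 2 := by ring
      _ ≤ Real.sqrt (∑ s, μ s * (fderiv ℝ V θstar z s) ^ 2) ^ 2 :=
          pow_le_pow_left₀ (mul_nonneg hσs0 hnz.le) h1 2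
      _ = _ := h2
  -- main estimate
  have hstep :
      γ * ∑ s, ∑ s', μ s * P s s' * fderiv ℝ V θ z s * (V θ s' - V θstar s')
          - ∑ s, μ s * fderiv ℝ V θ z s * (V θ s - V θstar s)
        ≤ -((1 - γ) * (∑ s, μ s * (fderiv ℝ V θstar z s) ^ 2))
          + (1 + γ) * (Real.sqrt (∑ s, μ s * (fderiv ℝ V θ z s - fderiv ℝ V θstar z s) ^ 2)
                * Real.sqrt (∑ s, μ s * (V θ s - V θstar s) ^ 2)
              + Real.sqrt (∑ s, μ s * (fderiv ℝ V θstar z s) ^ 2)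
                * Real.sqrt (∑ s, μ s * ((V θ s - V θstar s) - fderiv ℝ V θstar z s) ^ 2)) :=
    combine P μ γ hPnonneg hProw hμnonneg hstat hγ0.le hγ1.le
      (fun s => fderiv ℝ V θ z s) (fun s => fderiv ℝ V θstar z s)
      (fun s => V θ s - V θstar s)
  have hgoal : γ * ∑ s, ∑ s', μ s * P s s' * fderiv ℝ V θ z s * (V θ - V θstar) s'
        - ∑ s, μ s * fderiv ℝ V θ z s * (V θ - V θstar) s
      = γ * ∑ s, ∑ s', μ s * P s s' * fderiv ℝ V θ z s * (V θ s' - V θstar s')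
        - ∑ s, μ s * fderiv ℝ V θ z s * (V θ s - V θstar s) := by
    simp only [PiLp.sub_apply]
  rw [hgoal]
  refine hstep.trans ?_
  have e1 : Real.sqrt (∑ s, μ s * (fderiv ℝ V θ z s - fderiv ℝ V θstar z s) ^ 2)
        * Real.sqrt (∑ s, μ s * (V θ s - V θstar s) ^ 2)
      ≤ (c0 * c * ‖z‖ ^ 2) * (l * ‖z‖) :=
    mul_le_mul d1 d2 (Real.sqrt_nonneg _) (by positivity)
  have e2 : Real.sqrt (∑ s, μ s * (fderiv ℝ V θstar z s) ^ 2)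
        * Real.sqrt (∑ s, μ s * ((V θ s - V θstar s) - fderiv ℝ V θstar z s) ^ 2)
      ≤ (l * ‖z‖) * (c0 * c * ‖z‖ ^ 2) :=
    mul_le_mul d4 d3 (Real.sqrt_nonneg _) (by positivity)
  have e3 : (1 - γ) * (σs ^ 2 * ‖z‖ ^ 2)
      ≤ (1 - γ) * (∑ s, μ s * (fderiv ℝ V θstar z s) ^ 2) :=
    mul_le_mul_of_nonneg_left hkey (by linarith)
  have e4 : (1 + γ) * (Real.sqrt (∑ s, μ s * (fderiv ℝ V θ z s - fderiv ℝ V θstar z s) ^ 2)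
        * Real.sqrt (∑ s, μ s * (V θ s - V θstar s) ^ 2)
      + Real.sqrt (∑ s, μ s * (fderiv ℝ V θstar z s) ^ 2)
        * Real.sqrt (∑ s, μ s * ((V θ s - V θstar s) - fderiv ℝ V θstar z s) ^ 2))
      ≤ (1 + γ) * ((c0 * c * ‖z‖ ^ 2) * (l * ‖z‖) + (l * ‖z‖) * (c0 * c * ‖z‖ ^ 2)) :=
    mul_le_mul_of_nonneg_left (add_le_add e1 e2) (by linarith)
  have e5 : (1 + γ) * ((c0 * c * ‖z‖ ^ 2) * (l * ‖z‖) + (l * ‖z‖) * (c0 * c * ‖z‖ ^ 2))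
      = 2 * (1 + γ) * c0 * l * c * ‖z‖ ^ 3 := by ring
  linarith [e3, e4, e5]
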